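/- Under Assumption A with k > 0, there exist r ∈ (0,1], β > 0, M > 0 and b > 0 such that, with g(x) = x₁^r, C = [0,M]² ∪ {(x₁,x₂) ∈ [0,∞)² : x₁ ≤ k·x₂}, and η₁, η₂ i.i.d. copies of η, the two-step drift condition holds: E[(η₂²)^r · ψ(ψ(x₁,x₂)·η₁², x₁)^r] ≤ (1−β)·x₁^r − β for every x = (x₁,x₂) ∈ [0,∞)² \ C, and E[(η₂²)^r · ψ(ψ(x₁,x₂)·η₁², x₁)^r] ≤ b for every x ∈ C. -/

import Mathlib

set_option maxHeartbeats 1000000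


open MeasureTheory ProbabilityTheory Set Filter
open scoped ENNReal

private lemma real_rpow_add_le {a b p : ℝ} (ha : 0 ≤ a) (hb : 0 ≤ b) (hp : 0 ≤ p) (hp1 : p ≤ 1) :
    (a + b) ^ p ≤ a ^ p + b ^ p := by
  have h := NNReal.rpow_add_le_add_rpow a.toNNReal b.toNNReal hp hp1
  have h' := NNReal.coe_le_coe.2 h
  simpa [NNReal.coe_rpow, ← Real.toNNReal_add ha hb, Real.coe_toNNReal _ ha,
    Real.coe_toNNReal _ hb, Real.coe_toNNReal _ (add_nonneg ha hb)] using h'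

private lemma hoelder_aux {Ω' : Type*} [MeasurableSpace Ω'] (P : Measure Ω')
    [IsProbabilityMeasure P] {r : ℝ} (hr0 : 0 < r) (hr1 : r < 1)
    {X : Ω' → ℝ≥0∞} (hX : Measurable X) (hX1 : ∫⁻ z, X z ∂P = 1)
    {A : Set Ω'} (hA : MeasurableSet A) :
    ∫⁻ z, (X z) ^ r * A.indicator 1 z ∂P ≤ (P A) ^ (1 - r) := by
  have hpq : Real.HolderConjugate r⁻¹ (1 - r)⁻¹ :=
    Real.HolderConjugate.inv_inv hr0 (by linarith) (by ring)
  have hfm : AEMeasurable (fun z => X z ^ r) P := (hX.pow measurable_const).aemeasurable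
  have hgm : AEMeasurable (A.indicator (1 : Ω' → ℝ≥0∞)) P :=
    ((measurable_one (α := ℝ≥0∞)).indicator hA).aemeasurable
  have h := ENNReal.lintegral_mul_le_Lp_mul_Lq P hpq hfm hgm
  simp only [Pi.mul_apply] at h
  have e1 : ∀ z : Ω', (X z ^ r) ^ r⁻¹ = X z := fun z => by
    rw [← ENNReal.rpow_mul, mul_inv_cancel₀ hr0.ne', ENNReal.rpow_one]
  have e2 : ∀ z : Ω', (A.indicator (1 : Ω' → ℝ≥0∞) z) ^ (1 - r)⁻¹ = A.indicator 1 z := by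
    intro z
    by_cases hz : z ∈ A
    · simp [hz]
    · simp [hz, ENNReal.zero_rpow_of_pos (inv_pos.mpr (by linarith : (0:ℝ) < 1 - r))]
  simp only [e1, e2] at h
  calc ∫⁻ z, (X z) ^ r * A.indicator 1 z ∂P
      ≤ (∫⁻ z, X z ∂P) ^ (1 / r⁻¹) * (∫⁻ z, A.indicator 1 z ∂P) ^ (1 / (1 - r)⁻¹) := h
    _ = (P A) ^ (1 - r) := by
        rw [hX1, lintegral_indicator_one hA, ENNReal.one_rpow, one_mul, one_div, inv_inv]

private lemma master_bound {Ω' : Type*} [MeasurableSpace Ω'] (P : Measure Ω')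
    [IsProbabilityMeasure P] (ω α k : ℝ) (hω : 0 < ω) (hα : 0 ≤ α)
    (ψ : ℝ → ℝ → ℝ)
    (hψ : ∀ x₁ x₂, ψ x₁ x₂ = ω + α * x₁ * (if k * x₂ < x₁ then 1 else 0))
    (η₁ η₂ : Ω' → ℝ) (hη₁ : Measurable η₁) (hη₂ : Measurable η₂)
    {r : ℝ} (hr0 : 0 < r) (hr1 : r < 1)
    (h2 : ∫⁻ z, ENNReal.ofReal ((η₂ z) ^ 2) ∂P = 1)
    (h12 : ∫⁻ z, ENNReal.ofReal ((η₂ z) ^ 2) * ENNReal.ofReal ((η₁ z) ^ 2) ∂P = 1)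
    (x₁ t : ℝ) (ht : 0 ≤ t) (A : Set Ω') (hA : MeasurableSet A)
    (hsub : ∀ z, k * x₁ < t * (η₁ z) ^ 2 → z ∈ A) :
    ∫ z, ((η₂ z) ^ 2) ^ r * (ψ (t * (η₁ z) ^ 2) x₁) ^ r ∂P ≤
      ω ^ r + α ^ r * t ^ r * (P A).toReal ^ (1 - r) := by
  have hb1 : Measurable (fun z => (η₁ z) ^ 2) := hη₁.pow_const 2
  have hb2 : Measurable (fun z => (η₂ z) ^ 2) := hη₂.pow_const 2
  have hset : MeasurableSet {z : Ω' | k * x₁ < t * (η₁ z) ^ 2} :=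
    measurableSet_lt measurable_const (measurable_const.mul hb1)
  have hind : Measurable fun z => (if k * x₁ < t * (η₁ z) ^ 2 then (1:ℝ) else 0) :=
    Measurable.ite hset measurable_const measurable_const
  have hFm : Measurable fun z => ((η₂ z) ^ 2) ^ r * (ψ (t * (η₁ z) ^ 2) x₁) ^ r := by
    simp only [hψ]
    exact (hb2.pow measurable_const).mul
      ((measurable_const.add (((measurable_const.mul hb1).const_mul α).mul hind)).pow
        measurable_const)
  have hψnn : ∀ z : Ω', 0 ≤ ψ (t * (η₁ z) ^ 2) x₁ := by
    intro z
    rw [hψ]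
    have : (0:ℝ) ≤ α * (t * (η₁ z) ^ 2) := mul_nonneg hα (mul_nonneg ht (sq_nonneg _))
    split <;> nlinarith
  have hFnn : ∀ z : Ω', 0 ≤ ((η₂ z) ^ 2) ^ r * (ψ (t * (η₁ z) ^ 2) x₁) ^ r := fun z =>
    mul_nonneg (Real.rpow_nonneg (sq_nonneg _) r) (Real.rpow_nonneg (hψnn z) r)
  have h0 : ∫ z, ((η₂ z) ^ 2) ^ r * (ψ (t * (η₁ z) ^ 2) x₁) ^ r ∂P =
      (∫⁻ z, ENNReal.ofReal (((η₂ z) ^ 2) ^ r * (ψ (t * (η₁ z) ^ 2) x₁) ^ r) ∂P).toReal :=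
    integral_eq_lintegral_of_nonneg_ae (Eventually.of_forall hFnn) hFm.aestronglyMeasurable
  -- pointwise bound
  have hpt : ∀ z : Ω', ENNReal.ofReal (((η₂ z) ^ 2) ^ r * (ψ (t * (η₁ z) ^ 2) x₁) ^ r) ≤
      ENNReal.ofReal ω ^ r * ENNReal.ofReal (((η₂ z) ^ 2) ^ r) +
        ENNReal.ofReal α ^ r * ENNReal.ofReal t ^ r *
          ((ENNReal.ofReal ((η₂ z) ^ 2) * ENNReal.ofReal ((η₁ z) ^ 2)) ^ r *
            A.indicator 1 z) := by
    intro z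
    have he2 : (0:ℝ) ≤ (η₂ z) ^ 2 := sq_nonneg _
    have he1 : (0:ℝ) ≤ (η₁ z) ^ 2 := sq_nonneg _
    have hy : (0:ℝ) ≤ t * (η₁ z) ^ 2 := mul_nonneg ht he1
    rw [hψ]
    by_cases hc : k * x₁ < t * (η₁ z) ^ 2
    · have hzA : z ∈ A := hsub z hc
      rw [if_pos hc, mul_one]
      have h1 : (ω + α * (t * (η₁ z) ^ 2)) ^ r ≤ ω ^ r + (α * (t * (η₁ z) ^ 2)) ^ r :=
        real_rpow_add_le hω.le (mul_nonneg hα hy) hr0.le hr1.le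
      have h2' : ((η₂ z) ^ 2) ^ r * (ω + α * (t * (η₁ z) ^ 2)) ^ r ≤
          ((η₂ z) ^ 2) ^ r * ω ^ r + ((η₂ z) ^ 2) ^ r * (α * (t * (η₁ z) ^ 2)) ^ r := by
        have := mul_le_mul_of_nonneg_left h1 (Real.rpow_nonneg he2 r)
        nlinarith [Real.rpow_nonneg he2 r]
      refine le_trans (ENNReal.ofReal_le_ofReal h2') ?_
      rw [ENNReal.ofReal_add (mul_nonneg (Real.rpow_nonneg he2 r) (Real.rpow_nonneg hω.le r))
        (mul_nonneg (Real.rpow_nonneg he2 r) (Real.rpow_nonneg (mul_nonneg hα hy) r))]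
      apply add_le_add
      · rw [ENNReal.ofReal_mul (Real.rpow_nonneg he2 r), mul_comm,
          ENNReal.ofReal_rpow_of_pos hω]
      · have hre : ((η₂ z) ^ 2) ^ r * (α * (t * (η₁ z) ^ 2)) ^ r =
            α ^ r * t ^ r * ((η₂ z) ^ 2 * (η₁ z) ^ 2) ^ r := by
          rw [← Real.mul_rpow hα ht,
            ← Real.mul_rpow (mul_nonneg hα ht) (mul_nonneg he2 he1),
            ← Real.mul_rpow he2 (mul_nonneg hα hy)]
          congr 1
          ring
        refine le_of_eq ?_
        rw [hre, Set.indicator_of_mem hzA, Pi.one_apply, mul_one,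
          ← ENNReal.ofReal_mul he2,
          ENNReal.ofReal_rpow_of_nonneg hα hr0.le,
          ENNReal.ofReal_rpow_of_nonneg ht hr0.le,
          ENNReal.ofReal_rpow_of_nonneg (mul_nonneg he2 he1) hr0.le,
          ← ENNReal.ofReal_mul (Real.rpow_nonneg hα r),
          ← ENNReal.ofReal_mul (mul_nonneg (Real.rpow_nonneg hα r) (Real.rpow_nonneg ht r))]
    · rw [if_neg hc, mul_zero, add_zero]
      refine le_trans ?_ (le_add_of_nonneg_right zero_le)
      rw [ENNReal.ofReal_mul (Real.rpow_nonneg he2 r), mul_comm,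
        ENNReal.ofReal_rpow_of_pos hω]
  -- integral of bound
  have hmeas2 : Measurable fun z => ENNReal.ofReal (((η₂ z) ^ 2) ^ r) :=
    (hb2.pow measurable_const).ennreal_ofReal
  have hmeasp : Measurable fun z =>
      (ENNReal.ofReal ((η₂ z) ^ 2) * ENNReal.ofReal ((η₁ z) ^ 2)) ^ r * A.indicator 1 z :=
    ((hb2.ennreal_ofReal.mul hb1.ennreal_ofReal).pow measurable_const).mul
      (measurable_one.indicator hA)
  have hI2 : ∫⁻ z, ENNReal.ofReal (((η₂ z) ^ 2) ^ r) ∂P ≤ 1 := by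
    have hcongr : ∀ z : Ω', ENNReal.ofReal (((η₂ z) ^ 2) ^ r) =
        (ENNReal.ofReal ((η₂ z) ^ 2)) ^ r * Set.indicator (univ : Set Ω') 1 z := by
      intro z
      rw [ENNReal.ofReal_rpow_of_nonneg (sq_nonneg _) hr0.le]
      simp
    calc ∫⁻ z, ENNReal.ofReal (((η₂ z) ^ 2) ^ r) ∂P
        = ∫⁻ z, (ENNReal.ofReal ((η₂ z) ^ 2)) ^ r * Set.indicator (univ : Set Ω') 1 z ∂P :=
          lintegral_congr hcongr
      _ ≤ (P univ) ^ (1 - r) :=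
          hoelder_aux P hr0 hr1 hb2.ennreal_ofReal h2 MeasurableSet.univ
      _ = 1 := by simp
  have hI12 : ∫⁻ z, (ENNReal.ofReal ((η₂ z) ^ 2) * ENNReal.ofReal ((η₁ z) ^ 2)) ^ r *
      A.indicator 1 z ∂P ≤ (P A) ^ (1 - r) :=
    hoelder_aux P hr0 hr1 (hb2.ennreal_ofReal.mul hb1.ennreal_ofReal) h12 hA
  have hlin : ∫⁻ z, ENNReal.ofReal (((η₂ z) ^ 2) ^ r * (ψ (t * (η₁ z) ^ 2) x₁) ^ r) ∂P ≤
      ENNReal.ofReal ω ^ r + ENNReal.ofReal α ^ r * ENNReal.ofReal t ^ r * (P A) ^ (1 - r) := by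
    refine le_trans (lintegral_mono hpt) ?_
    rw [lintegral_add_left (hmeas2.const_mul _), lintegral_const_mul _ hmeas2,
      lintegral_const_mul _ hmeasp]
    calc ENNReal.ofReal ω ^ r * ∫⁻ z, ENNReal.ofReal (((η₂ z) ^ 2) ^ r) ∂P +
          ENNReal.ofReal α ^ r * ENNReal.ofReal t ^ r *
            ∫⁻ z, (ENNReal.ofReal ((η₂ z) ^ 2) * ENNReal.ofReal ((η₁ z) ^ 2)) ^ r *
              A.indicator 1 z ∂P
        ≤ ENNReal.ofReal ω ^ r * 1 +
            ENNReal.ofReal α ^ r * ENNReal.ofReal t ^ r * (P A) ^ (1 - r) := by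
          gcongr
      _ = ENNReal.ofReal ω ^ r + ENNReal.ofReal α ^ r * ENNReal.ofReal t ^ r * (P A) ^ (1 - r) :=
          by rw [mul_one]
  have hfin : ENNReal.ofReal ω ^ r + ENNReal.ofReal α ^ r * ENNReal.ofReal t ^ r *
      (P A) ^ (1 - r) ≠ ⊤ := by
    apply ENNReal.add_ne_top.mpr
    constructor
    · exact ENNReal.rpow_ne_top_of_nonneg hr0.le ENNReal.ofReal_ne_top
    · exact ENNReal.mul_ne_top
        (ENNReal.mul_ne_top (ENNReal.rpow_ne_top_of_nonneg hr0.le ENNReal.ofReal_ne_top)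
          (ENNReal.rpow_ne_top_of_nonneg hr0.le ENNReal.ofReal_ne_top))
        (ENNReal.rpow_ne_top_of_nonneg (by linarith) (measure_ne_top P A))
  rw [h0]
  refine le_trans (ENNReal.toReal_mono hfin hlin) ?_
  rw [ENNReal.toReal_add (ENNReal.rpow_ne_top_of_nonneg hr0.le ENNReal.ofReal_ne_top)
      (by
        exact ENNReal.mul_ne_top
          (ENNReal.mul_ne_top (ENNReal.rpow_ne_top_of_nonneg hr0.le ENNReal.ofReal_ne_top)
            (ENNReal.rpow_ne_top_of_nonneg hr0.le ENNReal.ofReal_ne_top))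
          (ENNReal.rpow_ne_top_of_nonneg (by linarith) (measure_ne_top P A))),
    ENNReal.toReal_mul, ENNReal.toReal_mul, ← ENNReal.toReal_rpow, ← ENNReal.toReal_rpow,
    ← ENNReal.toReal_rpow, ← ENNReal.toReal_rpow, ENNReal.toReal_ofReal hω.le,
    ENNReal.toReal_ofReal hα, ENNReal.toReal_ofReal ht]

/-- Two-step drift condition: under Assumption A with `k > 0`, there are `r ∈ (0,1]`,
`β > 0`, `M > 0`, `b > 0` such that, with `C = [0,M]² ∪ {x₁ ≤ k x₂}`,
`E[(η₂²)^r ψ(ψ(x) η₁², x₁)^r] ≤ (1-β) x₁^r - β` outside `C` and `≤ b` on `C`. -/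
theorem stmt12
    {Ω' : Type*} [MeasurableSpace Ω'] (P : Measure Ω') [IsProbabilityMeasure P]
    (ω α k : ℝ) (hω : 0 < ω) (hα : 0 ≤ α) (hk : 0 < k)
    (ψ : ℝ → ℝ → ℝ)
    (hψ : ∀ x₁ x₂, ψ x₁ x₂ = ω + α * x₁ * (if k * x₂ < x₁ then 1 else 0))
    (η₁ η₂ : Ω' → ℝ) (hη₁ : Measurable η₁) (hη₂ : Measurable η₂)
    (hindep : IndepFun η₁ η₂ P)
    (f : ℝ → ℝ≥0∞) (hf : Measurable f) (hfpos : ∀ x, 0 ≤ x → 0 < f x)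
    (hd₁ : Measure.map (fun z => (η₁ z) ^ 2) P = (volume.restrict (Ici (0 : ℝ))).withDensity f)
    (hd₂ : Measure.map (fun z => (η₂ z) ^ 2) P = (volume.restrict (Ici (0 : ℝ))).withDensity f)
    (hint₁ : Integrable η₁ P) (hint₂ : Integrable η₂ P)
    (hm₁ : ∫ z, η₁ z ∂P = 0) (hm₂ : ∫ z, η₂ z ∂P = 0)
    (hv₁ : ∫ z, (η₁ z) ^ 2 ∂P = 1) (hv₂ : ∫ z, (η₂ z) ^ 2 ∂P = 1) :
    ∃ r ∈ Ioc (0 : ℝ) 1, ∃ β > (0 : ℝ), ∃ M > (0 : ℝ), ∃ b > (0 : ℝ),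
      ∀ x₁ x₂ : ℝ, 0 ≤ x₁ → 0 ≤ x₂ →
        (¬((x₁ ≤ M ∧ x₂ ≤ M) ∨ x₁ ≤ k * x₂) →
          ∫ z, ((η₂ z) ^ 2) ^ r * (ψ (ψ x₁ x₂ * (η₁ z) ^ 2) x₁) ^ r ∂P ≤
            (1 - β) * x₁ ^ r - β) ∧
        (((x₁ ≤ M ∧ x₂ ≤ M) ∨ x₁ ≤ k * x₂) →
          ∫ z, ((η₂ z) ^ 2) ^ r * (ψ (ψ x₁ x₂ * (η₁ z) ^ 2) x₁) ^ r ∂P ≤ b) := by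
  -- second moments as lintegrals
  have key : ∀ (η : Ω' → ℝ), Measurable η → (∫ z, (η z) ^ 2 ∂P = 1) →
      ∫⁻ z, ENNReal.ofReal ((η z) ^ 2) ∂P = 1 := by
    intro η hη hv
    have h := integral_eq_lintegral_of_nonneg_ae (μ := P) (f := fun z => (η z) ^ 2)
      (Eventually.of_forall fun z => sq_nonneg _) ((hη.pow_const 2).aestronglyMeasurable)
    rw [hv] at h
    exact (ENNReal.toReal_eq_one_iff _).mp h.symm
  have h2 := key η₂ hη₂ hv₂
  have h1 := key η₁ hη₁ hv₁
  have hcomp : IndepFun (fun z => ENNReal.ofReal ((η₂ z) ^ 2))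
      (fun z => ENNReal.ofReal ((η₁ z) ^ 2)) P :=
    hindep.symm.comp ((measurable_id.pow_const 2).ennreal_ofReal)
      ((measurable_id.pow_const 2).ennreal_ofReal)
  have h12 : ∫⁻ z, ENNReal.ofReal ((η₂ z) ^ 2) * ENNReal.ofReal ((η₁ z) ^ 2) ∂P = 1 := by
    have h := lintegral_mul_eq_lintegral_mul_lintegral_of_indepFun
      ((hη₂.pow_const 2).ennreal_ofReal) ((hη₁.pow_const 2).ennreal_ofReal) hcomp
    simp only [Pi.mul_apply] at h
    rw [h, h2, h1, one_mul]
  -- threshold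
  set m₀ : ℝ := min 1 k with hm₀def
  have hm₀ : 0 < m₀ := lt_min one_pos hk
  set τ : ℝ := k * m₀ / (ω + α * m₀) with hτdef
  have hden₀ : 0 < ω + α * m₀ := add_pos_of_pos_of_nonneg hω (mul_nonneg hα hm₀.le)
  have hτpos : 0 < τ := div_pos (mul_pos hk hm₀) hden₀
  set Aset : Set Ω' := {z : Ω' | τ < (η₁ z) ^ 2} with hAdef
  have hAmeas : MeasurableSet Aset := measurableSet_lt measurable_const (hη₁.pow_const 2)
  -- positivity of the complement probability
  have hqpos : 0 < P {z : Ω' | (η₁ z) ^ 2 ≤ τ} := by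
    have hpre : (fun z => (η₁ z) ^ 2) ⁻¹' (Icc 0 τ) ⊆ {z : Ω' | (η₁ z) ^ 2 ≤ τ} := by
      intro z hz; exact hz.2
    have hmap : P ((fun z => (η₁ z) ^ 2) ⁻¹' (Icc 0 τ)) =
        ((volume.restrict (Ici (0:ℝ))).withDensity f) (Icc 0 τ) := by
      rw [← hd₁, Measure.map_apply (hη₁.pow_const 2) measurableSet_Icc]
    have hwd : ((volume.restrict (Ici (0:ℝ))).withDensity f) (Icc 0 τ) ≠ 0 := by
      rw [withDensity_apply _ measurableSet_Icc,
        Measure.restrict_restrict measurableSet_Icc,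
        Set.inter_eq_self_of_subset_left Set.Icc_subset_Ici_self]
      intro hzero
      have hae := (lintegral_eq_zero_iff hf).mp hzero
      have hnull : (volume.restrict (Icc (0:ℝ) τ)) {x | f x ≠ 0} = 0 := by
        have := hae
        rw [Filter.EventuallyEq, ae_iff] at this
        simpa using this
      have hsubset : Icc (0:ℝ) τ ⊆ {x | f x ≠ 0} := fun x hx => (hfpos x hx.1).ne'
      have hle : (volume.restrict (Icc (0:ℝ) τ)) (Icc (0:ℝ) τ) ≤
          (volume.restrict (Icc (0:ℝ) τ)) {x | f x ≠ 0} := measure_mono hsubset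
      rw [Measure.restrict_apply_self, hnull] at hle
      rw [Real.volume_Icc] at hle
      simp only [nonpos_iff_eq_zero, ENNReal.ofReal_eq_zero] at hle
      linarith
    calc (0:ℝ≥0∞) < ((volume.restrict (Ici (0:ℝ))).withDensity f) (Icc 0 τ) :=
          pos_iff_ne_zero.mpr hwd
      _ = P ((fun z => (η₁ z) ^ 2) ⁻¹' (Icc 0 τ)) := hmap.symm
      _ ≤ P {z : Ω' | (η₁ z) ^ 2 ≤ τ} := measure_mono hpre
  have hAc : Aset = {z : Ω' | (η₁ z) ^ 2 ≤ τ}ᶜ := by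
    ext z; simp [hAdef, not_le]
  have hPA_lt : P Aset < 1 := by
    rw [hAc, prob_compl_eq_one_sub (measurableSet_le (hη₁.pow_const 2) measurable_const)]
    exact ENNReal.sub_lt_self ENNReal.one_ne_top one_ne_zero hqpos.ne'
  set p : ℝ := (P Aset).toReal with hpdef
  have hp0 : (0:ℝ) ≤ p := ENNReal.toReal_nonneg
  have hp1 : p < 1 := by
    have h := (ENNReal.toReal_lt_toReal (measure_ne_top P Aset) ENNReal.one_ne_top).mpr hPA_lt
    rwa [ENNReal.toReal_one] at h
  -- choice of r
  obtain ⟨r, hr0, hrhalf, hclt⟩ : ∃ r : ℝ, 0 < r ∧ r ≤ 1/2 ∧ α ^ r * α ^ r * p ^ (1-r) < 1 := by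
    rcases eq_or_lt_of_le hp0 with hp | hppos
    · refine ⟨1/2, by norm_num, le_refl _, ?_⟩
      rw [← hp, Real.zero_rpow (by norm_num : (1:ℝ) - 1/2 ≠ 0), mul_zero]
      norm_num
    · set A0 : ℝ := max α 1 with hA0def
      have hA1 : (1:ℝ) ≤ A0 := le_max_right _ _
      have hA0pos : (0:ℝ) < A0 := lt_of_lt_of_le one_pos hA1
      have hlogA : 0 ≤ Real.log A0 := Real.log_nonneg hA1
      have hLpos : 0 < -Real.log p := by
        have := Real.log_neg hppos hp1; linarith
      set L : ℝ := -Real.log p with hLdef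
      set r : ℝ := min (1/2 : ℝ) (L / (8 * Real.log A0 + 1)) with hrdef
      have hrpos : 0 < r := lt_min (by norm_num) (div_pos hLpos (by linarith))
      refine ⟨r, hrpos, min_le_left _ _, ?_⟩
      have hαA : α ^ r ≤ A0 ^ r := Real.rpow_le_rpow hα (le_max_left _ _) hrpos.le
      have hchain : α ^ r * α ^ r * p ^ (1-r) ≤ A0 ^ r * A0 ^ r * p ^ (1-r) := by
        have h0α : 0 ≤ α ^ r := Real.rpow_nonneg hα _
        have h0A : 0 ≤ A0 ^ r := Real.rpow_nonneg hA0pos.le _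
        have hple : 0 ≤ p ^ (1-r) := Real.rpow_nonneg hp0 _
        have hsq : α ^ r * α ^ r ≤ A0 ^ r * A0 ^ r := mul_le_mul hαA hαA h0α h0A
        exact mul_le_mul_of_nonneg_right hsq hple
      have hr2 : r * (8 * Real.log A0 + 1) ≤ L := by
        have hmin := min_le_right (1/2 : ℝ) (L / (8 * Real.log A0 + 1))
        calc r * (8 * Real.log A0 + 1)
            ≤ (L / (8 * Real.log A0 + 1)) * (8 * Real.log A0 + 1) := by
              exact mul_le_mul_of_nonneg_right hmin (by linarith)
          _ = L := by field_simp
      have hrlog : r * Real.log A0 ≤ L / 8 := by nlinarith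
      have hexp : A0 ^ r * A0 ^ r * p ^ (1-r) =
          Real.exp (Real.log A0 * r + Real.log A0 * r + Real.log p * (1-r)) := by
        rw [Real.rpow_def_of_pos hA0pos, Real.rpow_def_of_pos hppos, ← Real.exp_add,
          ← Real.exp_add]
      have hrhalf' : r ≤ 1/2 := min_le_left _ _
      have hexplt : Real.log A0 * r + Real.log A0 * r + Real.log p * (1-r) < 0 := by
        have hlp : Real.log p = -L := by rw [hLdef]; ring
        rw [hlp]
        nlinarith
      calc α ^ r * α ^ r * p ^ (1-r) ≤ A0 ^ r * A0 ^ r * p ^ (1-r) := hchain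
        _ < 1 := by rw [hexp]; exact Real.exp_lt_one_iff.mpr hexplt
  have hr1 : r < 1 := by linarith
  -- constants
  set c : ℝ := α ^ r * α ^ r * p ^ (1-r) with hcdef
  have hc0 : 0 ≤ c := mul_nonneg (mul_nonneg (Real.rpow_nonneg hα r)
    (Real.rpow_nonneg hα r)) (Real.rpow_nonneg hp0 _)
  set β : ℝ := (1 - c)/2 with hβdef
  have hβpos : 0 < β := by rw [hβdef]; linarith
  set D : ℝ := ω ^ r + α ^ r * p ^ (1-r) * ω ^ r with hDdef
  have hD0 : 0 ≤ D := add_nonneg (Real.rpow_nonneg hω.le r)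
    (mul_nonneg (mul_nonneg (Real.rpow_nonneg hα r) (Real.rpow_nonneg hp0 _))
      (Real.rpow_nonneg hω.le r))
  set M : ℝ := max 1 (((D + β)/β) ^ r⁻¹ / m₀) with hMdef
  have hM1 : (1:ℝ) ≤ M := le_max_left _ _
  have hMpos : (0:ℝ) < M := lt_of_lt_of_le one_pos hM1
  set b : ℝ := ω ^ r + α ^ r * (ω + α * M) ^ r + 1 with hbdef
  have hbpos : 0 < b := by
    have h1' := Real.rpow_nonneg hω.le r
    have h2' := mul_nonneg (Real.rpow_nonneg hα r)
      (Real.rpow_nonneg (show (0:ℝ) ≤ ω + α * M by nlinarith) r)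
    rw [hbdef]; linarith
  refine ⟨r, ⟨hr0, by linarith⟩, β, hβpos, M, hMpos, b, hbpos, ?_⟩
  intro x₁ x₂ hx₁ hx₂
  constructor
  · intro hout
    push_neg at hout
    obtain ⟨houtM, houtk⟩ := hout
    have hkx : k * x₂ < x₁ := houtk
    have hx₁M : M * m₀ ≤ x₁ := by
      rcases le_or_gt x₁ M with hle | hlt
      · have hx₂M : M < x₂ := houtM hle
        have hkM : k * M < k * x₂ := mul_lt_mul_of_pos_left hx₂M hk
        have hm₀k : m₀ ≤ k := min_le_right _ _
        calc M * m₀ ≤ M * k := mul_le_mul_of_nonneg_left hm₀k hMpos.le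
          _ = k * M := mul_comm _ _
          _ ≤ x₁ := by linarith
      · have hm₀1 : m₀ ≤ 1 := min_le_left _ _
        calc M * m₀ ≤ M * 1 := mul_le_mul_of_nonneg_left hm₀1 hMpos.le
          _ = M := mul_one M
          _ ≤ x₁ := hlt.le
    have hm₀x : m₀ ≤ x₁ := by
      calc m₀ = 1 * m₀ := (one_mul _).symm
        _ ≤ M * m₀ := mul_le_mul_of_nonneg_right hM1 hm₀.le
        _ ≤ x₁ := hx₁M
    have hx₁pos : 0 < x₁ := lt_of_lt_of_le hm₀ hm₀x
    have hψx : ψ x₁ x₂ = ω + α * x₁ := by rw [hψ, if_pos hkx, mul_one]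
    have hden : 0 < ω + α * x₁ := add_pos_of_pos_of_nonneg hω (mul_nonneg hα hx₁)
    rw [hψx]
    have hmb := master_bound P ω α k hω hα ψ hψ η₁ η₂ hη₁ hη₂ hr0 hr1 h2 h12 x₁
      (ω + α * x₁) hden.le Aset hAmeas ?_
    swap
    · intro z hz
      have he : (0:ℝ) ≤ (η₁ z) ^ 2 := sq_nonneg _
      show τ < (η₁ z) ^ 2
      rw [hτdef, div_lt_iff₀ hden₀]
      have hz1 : m₀ * (k * x₁) < m₀ * ((ω + α * x₁) * (η₁ z) ^ 2) :=
        mul_lt_mul_of_pos_left hz hm₀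
      have hz2 : (η₁ z) ^ 2 * ω * m₀ ≤ (η₁ z) ^ 2 * ω * x₁ :=
        mul_le_mul_of_nonneg_left hm₀x (mul_nonneg he hω.le)
      have hz3 : x₁ * (k * m₀) < x₁ * ((η₁ z) ^ 2 * (ω + α * m₀)) := by nlinarith [hz1, hz2]
      exact lt_of_mul_lt_mul_left hz3 hx₁pos.le
    have hsum : (ω + α * x₁) ^ r ≤ ω ^ r + α ^ r * x₁ ^ r := by
      have h := real_rpow_add_le hω.le (mul_nonneg hα hx₁) hr0.le hr1.le
      rwa [Real.mul_rpow hα hx₁] at h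
    have hx₁r : (D + β)/β ≤ x₁ ^ r := by
      have hDβpos : 0 < (D + β)/β := div_pos (by linarith) hβpos
      have hM' : ((D + β)/β) ^ r⁻¹ ≤ M * m₀ := by
        have hmax := le_max_right (1:ℝ) (((D + β)/β) ^ r⁻¹ / m₀)
        calc ((D + β)/β) ^ r⁻¹ = (((D + β)/β) ^ r⁻¹ / m₀) * m₀ := by field_simp
          _ ≤ M * m₀ := mul_le_mul_of_nonneg_right hmax hm₀.le
      have hx' : ((D + β)/β) ^ r⁻¹ ≤ x₁ := le_trans hM' hx₁M
      calc (D + β)/β = (((D + β)/β) ^ r⁻¹) ^ r := (Real.rpow_inv_rpow hDβpos.le hr0.ne').symm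
        _ ≤ x₁ ^ r := Real.rpow_le_rpow (Real.rpow_nonneg hDβpos.le _) hx' hr0.le
    have hppow : 0 ≤ p ^ (1-r) := Real.rpow_nonneg hp0 _
    have hαr : 0 ≤ α ^ r := Real.rpow_nonneg hα _
    calc ∫ z, ((η₂ z) ^ 2) ^ r * (ψ ((ω + α * x₁) * (η₁ z) ^ 2) x₁) ^ r ∂P
        ≤ ω ^ r + α ^ r * (ω + α * x₁) ^ r * p ^ (1-r) := hmb
      _ ≤ ω ^ r + α ^ r * (ω ^ r + α ^ r * x₁ ^ r) * p ^ (1-r) :=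
          add_le_add_right (mul_le_mul_of_nonneg_right
            (mul_le_mul_of_nonneg_left hsum hαr) hppow) _
      _ = D + c * x₁ ^ r := by rw [hDdef, hcdef]; ring
      _ ≤ (1 - β) * x₁ ^ r - β := by
        have hDβ : D + β ≤ β * x₁ ^ r := by
          rw [div_le_iff₀ hβpos] at hx₁r
          linarith
        have hβc : 1 - β - c = β := by rw [hβdef]; ring
        have h3 : (1 - β) * x₁ ^ r - c * x₁ ^ r = β * x₁ ^ r := by
          calc (1 - β) * x₁ ^ r - c * x₁ ^ r = (1 - β - c) * x₁ ^ r := by ring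
            _ = β * x₁ ^ r := by rw [hβc]
        linarith
  · intro hC
    have hψnn : 0 ≤ ψ x₁ x₂ := by
      rw [hψ]; split <;> nlinarith
    have hψle : ψ x₁ x₂ ≤ ω + α * M := by
      rw [hψ]
      split
      · rename_i hcond
        have hx₁M : x₁ ≤ M := by
          rcases hC with ⟨h, _⟩ | h
          · exact h
          · linarith
        nlinarith
      · nlinarith
    have hmb := master_bound P ω α k hω hα ψ hψ η₁ η₂ hη₁ hη₂ hr0 hr1 h2 h12 x₁
      (ψ x₁ x₂) hψnn univ MeasurableSet.univ (fun z _ => mem_univ z)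
    have huniv : (P (univ : Set Ω')).toReal ^ (1-r) = 1 := by
      rw [measure_univ, ENNReal.toReal_one, Real.one_rpow]
    rw [huniv, mul_one] at hmb
    have hψr : (ψ x₁ x₂) ^ r ≤ (ω + α * M) ^ r := Real.rpow_le_rpow hψnn hψle hr0.le
    have hαr : 0 ≤ α ^ r := Real.rpow_nonneg hα _
    calc ∫ z, ((η₂ z) ^ 2) ^ r * (ψ (ψ x₁ x₂ * (η₁ z) ^ 2) x₁) ^ r ∂P
        ≤ ω ^ r + α ^ r * (ψ x₁ x₂) ^ r := hmb
      _ ≤ b := by rw [hbdef]; nlinarith
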